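/- arXiv:2202.02184 — 5 statements merged into one kernel-verified Lean document; each statement's English description precedes it below -/
import Mathlib

section
/- The cone S' = {(C,Q,E) ∈ ℝ³ : C+2Q ≤ 0, Q−E ≤ 0, C+Q−E ≤ 0} equals the conical hull of the three rays generated by (−2,1,1), (0,−1,−1), and (2,−1,1); i.e., S' = {x·(−2,1,1) + y·(0,−1,−1) + z·(2,−1,1) : x,y,z ≥ 0}. -/
/-- The cone `S' = {C+2Q ≤ 0, Q−E ≤ 0, C+Q−E ≤ 0}` is the conical hull of
`(−2,1,1)` (teleportation), `(0,−1,−1)` (resource conversion) and `(2,−1,1)`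
(dense coding). -/
theorem stmt9 :
    {p : ℝ × ℝ × ℝ | p.1 + 2 * p.2.1 ≤ 0 ∧ p.2.1 - p.2.2 ≤ 0 ∧
        p.1 + p.2.1 - p.2.2 ≤ 0}
      = {p : ℝ × ℝ × ℝ | ∃ x y z : ℝ, 0 ≤ x ∧ 0 ≤ y ∧ 0 ≤ z ∧
          p = x • ((-2 : ℝ), (1 : ℝ), (1 : ℝ)) + y • ((0 : ℝ), (-1 : ℝ), (-1 : ℝ))
              + z • ((2 : ℝ), (-1 : ℝ), (1 : ℝ))} := by
  ext ⟨C, Q, E⟩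
  simp only [Set.mem_setOf_eq, Prod.smul_mk, smul_eq_mul, Prod.mk_add_mk, Prod.mk.injEq]
  constructor
  · rintro ⟨h1, h2, h3⟩
    exact ⟨(E - Q - C) / 2, -(C + 2 * Q) / 2, (E - Q) / 2,
      by linarith, by linarith, by linarith, by constructor <;> [ring; constructor <;> ring]⟩
  · rintro ⟨x, y, z, hx, hy, hz, hC, hQ, hE⟩
    refine ⟨?_, ?_, ?_⟩ <;> (subst hC; subst hQ; subst hE; nlinarith)
end

section
/- For δ ∈ [0, 1/2], a triple (C,Q,E) ∈ ℝ³ satisfies [∃ t ∈ [0, log q] with C+2Q ≤ (1−δ)(log q + t), Q−E ≤ (1−2δ)t, C+Q−E ≤ (1−δ)log q − δt] if and only if it satisfies all of: C+2Q ≤ 2(1−δ)log q, Q−E ≤ (1−2δ)log q, C+Q−E ≤ (1−δ)log q, C+(1+δ)Q−(1−δ)E ≤ (1−δ)log q, and ((1−2δ)/(1−δ))C + Q − E ≤ (1−2δ)log q (the last inequality interpreted for δ < 1; for δ = 1 only the first four are required with their degenerate forms). -/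
/-- Fourier–Motzkin elimination of `t` for `δ ∈ [0, 1/2]`. -/
theorem stmt11 (q δ : ℝ) (hq : 1 < q) (hδ : δ ∈ Set.Icc (0 : ℝ) (1 / 2))
    (C Q E : ℝ) :
    (∃ t ∈ Set.Icc (0 : ℝ) (Real.logb 2 q),
        C + 2 * Q ≤ (1 - δ) * (Real.logb 2 q + t) ∧
        Q - E ≤ (1 - 2 * δ) * t ∧
        C + Q - E ≤ (1 - δ) * Real.logb 2 q - δ * t)
      ↔ (C + 2 * Q ≤ 2 * (1 - δ) * Real.logb 2 q ∧
          Q - E ≤ (1 - 2 * δ) * Real.logb 2 q ∧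
          C + Q - E ≤ (1 - δ) * Real.logb 2 q ∧
          C + (1 + δ) * Q - (1 - δ) * E ≤ (1 - δ) * Real.logb 2 q ∧
          ((1 - 2 * δ) / (1 - δ)) * C + Q - E ≤ (1 - 2 * δ) * Real.logb 2 q) := by
  obtain ⟨hδ0, hδ2⟩ := hδ
  set L := Real.logb 2 q with hLdef
  have hL : 0 < L := Real.logb_pos (by norm_num) hq
  have h1δ : (0:ℝ) < 1 - δ := by linarith
  have h2δ : (0:ℝ) ≤ 1 - 2*δ := by linarith
  constructor
  · rintro ⟨t, ⟨ht0, htL⟩, h1, h2, h3⟩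
    refine ⟨by nlinarith, by nlinarith, by nlinarith, by nlinarith, ?_⟩
    rw [show ((1-2*δ)/(1-δ))*C + Q - E = ((1-2*δ)*C + (1-δ)*(Q-E))/(1-δ) from by
      field_simp; ring, div_le_iff₀ h1δ]
    nlinarith [mul_le_mul_of_nonneg_left h2 hδ0, mul_le_mul_of_nonneg_left h3 h2δ,
      mul_nonneg hδ0 (mul_nonneg h2δ ht0)]
  · rintro ⟨hA, hB, hC3, hD, hE⟩
    rcases eq_or_lt_of_le h2δ with hhalf | hhalf
    · -- δ = 1/2
      have hδe : δ = 1/2 := by linarith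
      refine ⟨max 0 ((C+2*Q)/(1-δ) - L), ⟨le_max_left _ _, ?_⟩, ?_, ?_, ?_⟩
      · apply max_le hL.le
        rw [sub_le_iff_le_add, div_le_iff₀ h1δ]; nlinarith
      · have h1 : (C+2*Q)/(1-δ) - L ≤ max 0 ((C+2*Q)/(1-δ) - L) := le_max_right _ _
        rw [sub_le_iff_le_add, div_le_iff₀ h1δ] at h1
        nlinarith
      · have : Q - E ≤ 0 := by nlinarith
        nlinarith [le_max_left (0:ℝ) ((C+2*Q)/(1-δ) - L)]
      · rw [sub_le_iff_le_add]
        have key1 : δ * ((C+2*Q)/(1-δ) - L) ≤ (1-δ)*L - (C+Q-E) := by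
          rw [mul_sub, sub_le_iff_le_add, ← mul_div_assoc, div_le_iff₀ h1δ]
          nlinarith
        rcases max_cases (0:ℝ) ((C+2*Q)/(1-δ) - L) with ⟨he, _⟩ | ⟨he, _⟩ <;> rw [he]
        · linarith
        · linarith
    · -- δ < 1/2
      have h2δ' : (0:ℝ) < 1 - 2*δ := hhalf
      set t1 := (C+2*Q)/(1-δ) - L with ht1
      set t2 := (Q-E)/(1-2*δ) with ht2
      have ht1L : t1 ≤ L := by rw [ht1, sub_le_iff_le_add, div_le_iff₀ h1δ]; nlinarith
      have ht2L : t2 ≤ L := by rw [ht2, div_le_iff₀ h2δ']; nlinarith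
      refine ⟨max 0 (max t1 t2), ⟨le_max_left _ _, ?_⟩, ?_, ?_, ?_⟩
      · exact max_le hL.le (max_le ht1L ht2L)
      · have h1 : t1 ≤ max 0 (max t1 t2) := le_trans (le_max_left _ _) (le_max_right _ _)
        rw [ht1, sub_le_iff_le_add, div_le_iff₀ h1δ] at h1
        nlinarith
      · have h1 : t2 ≤ max 0 (max t1 t2) := le_trans (le_max_right _ _) (le_max_right _ _)
        rw [ht2, div_le_iff₀ h2δ'] at h1
        nlinarith
      · rw [sub_le_iff_le_add]
        have key0 : δ * 0 ≤ (1-δ)*L - (C+Q-E) := by simpa using by linarith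
        have key1 : δ * t1 ≤ (1-δ)*L - (C+Q-E) := by
          rw [ht1, mul_sub, sub_le_iff_le_add, ← mul_div_assoc, div_le_iff₀ h1δ]
          nlinarith
        have key2 : δ * t2 ≤ (1-δ)*L - (C+Q-E) := by
          rw [ht2, ← mul_div_assoc, div_le_iff₀ h2δ']
          have hE' := hE
          rw [show ((1-2*δ)/(1-δ))*C + Q - E = ((1-2*δ)*C + (1-δ)*(Q-E))/(1-δ) from by
            field_simp; ring, div_le_iff₀ h1δ] at hE'
          ring_nf at hE' ⊢
          linarith
        have : δ * max 0 (max t1 t2) ≤ (1-δ)*L - (C+Q-E) := by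
          rcases max_cases (0:ℝ) (max t1 t2) with ⟨he, _⟩ | ⟨he, _⟩ <;> rw [he]
          · exact key0
          · rcases max_cases t1 t2 with ⟨he2, _⟩ | ⟨he2, _⟩ <;> rw [he2]
            exacts [key1, key2]
        linarith
end

section
/- For δ ∈ [1/2, 1), a triple (C,Q,E) ∈ ℝ³ satisfies [∃ t ∈ [0, log q] with C+2Q ≤ (1−δ)(log q + t), Q−E ≤ (1−2δ)t, C+Q−E ≤ (1−δ)log q − δt] if and only if it satisfies: C+2Q ≤ 2(1−δ)log q, Q−E ≤ 0, C+Q−E ≤ (1−δ)log q, C+(1+δ)Q−(1−δ)E ≤ (1−δ)log q, and ((2δ−1)/(1−δ))C + ((3δ−1)/(1−δ))Q − E ≤ (2δ−1)log q. -/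
/-- Fourier–Motzkin elimination of `t` for `δ ∈ [1/2, 1)`. -/
theorem stmt12 (q δ : ℝ) (hq : 1 < q) (hδ : δ ∈ Set.Ico (1 / 2 : ℝ) 1)
    (C Q E : ℝ) :
    (∃ t ∈ Set.Icc (0 : ℝ) (Real.logb 2 q),
        C + 2 * Q ≤ (1 - δ) * (Real.logb 2 q + t) ∧
        Q - E ≤ (1 - 2 * δ) * t ∧
        C + Q - E ≤ (1 - δ) * Real.logb 2 q - δ * t)
      ↔ (C + 2 * Q ≤ 2 * (1 - δ) * Real.logb 2 q ∧
          Q - E ≤ 0 ∧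
          C + Q - E ≤ (1 - δ) * Real.logb 2 q ∧
          C + (1 + δ) * Q - (1 - δ) * E ≤ (1 - δ) * Real.logb 2 q ∧
          ((2 * δ - 1) / (1 - δ)) * C + ((3 * δ - 1) / (1 - δ)) * Q - E
            ≤ (2 * δ - 1) * Real.logb 2 q) := by
  obtain ⟨hδ1, hδ2⟩ := hδ
  set L := Real.logb 2 q with hLdef
  have hL : 0 < L := Real.logb_pos (by norm_num) hq
  have h1δ : 0 < 1 - δ := by linarith
  have h1δ' : (1 - δ) ≠ 0 := ne_of_gt h1δ
  constructor
  · rintro ⟨t, ⟨ht0, htL⟩, h1, h2, h3⟩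
    refine ⟨by nlinarith, by nlinarith, by nlinarith, by nlinarith, ?_⟩
    have key : (2*δ-1)*C + (3*δ-1)*Q - (1-δ)*E ≤ (2*δ-1)*(1-δ)*L := by nlinarith
    rw [div_mul_eq_mul_div, div_mul_eq_mul_div, ← add_div,
      sub_le_iff_le_add, div_le_iff₀ h1δ]
    nlinarith [key]
  · rintro ⟨c1, c2, c3, c4, c5⟩
    have c5' : (2*δ-1)*C + (3*δ-1)*Q - (1-δ)*E ≤ (2*δ-1)*(1-δ)*L := by
      have := mul_le_mul_of_nonneg_left c5 (le_of_lt h1δ)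
      have e : (1-δ) * (((2*δ-1)/(1-δ))*C + ((3*δ-1)/(1-δ))*Q - E)
          = (2*δ-1)*C + (3*δ-1)*Q - (1-δ)*E := by
        field_simp
      rw [e] at this
      nlinarith [this]
    set X := C + 2*Q - (1-δ)*L with hX
    rcases le_or_gt X 0 with hX0 | hX0
    · exact ⟨0, ⟨le_refl 0, le_of_lt hL⟩, by nlinarith, by nlinarith, by nlinarith⟩
    · refine ⟨X / (1-δ), ⟨?_, ?_⟩, ?_, ?_, ?_⟩
      · positivity
      · rw [div_le_iff₀ h1δ]; nlinarith
      · have : (1-δ) * (X / (1-δ)) = X := by field_simp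
        nlinarith [this]
      · have : (1-δ) * (X / (1-δ)) = X := by field_simp
        nlinarith [this]
      · have : (1-δ) * (X / (1-δ)) = X := by field_simp
        nlinarith [this]
end

section
/- For 0 ≤ λ < δ ≤ 1 and w = ⌊λn⌋, the total binomial probability of fewer than w successes satisfies Σ_{v=0}^{w−1} (n choose v) δ^v (1−δ)^{n−v} ≤ exp(−n(δ−λ)²). -/
open Real Finset

/-- Hoeffding's lemma for a Bernoulli(δ) variable: the mgf of `-X` at `t ≥ 0`. -/
lemma bern_mgf (δ : ℝ) (hδ0 : 0 < δ) (hδ1 : δ ≤ 1) (t : ℝ) (ht : 0 ≤ t) :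
    1 - δ + δ * Real.exp (-t) ≤ Real.exp (-δ * t + t ^ 2 / 8) := by
  set m : ℝ → ℝ := fun x => 1 - δ + δ * Real.exp (-x) with hm
  have hmpos : ∀ x, 0 < m x := fun x => by
    have := Real.exp_pos (-x)
    simp only [hm]; nlinarith
  have hmd : ∀ x : ℝ, HasDerivAt m (-(δ * Real.exp (-x))) x := by
    intro x
    have h1 : HasDerivAt (fun x : ℝ => Real.exp (-x)) (-Real.exp (-x)) x := by
      simpa [Function.comp_def] using (Real.hasDerivAt_exp (-x)).comp x (hasDerivAt_neg x)
    have := (h1.const_mul δ).const_add (1 - δ)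
    simpa [hm, mul_comm] using this
  set g : ℝ → ℝ := fun x => -δ + x / 4 + δ * Real.exp (-x) / m x with hg
  have hqd : ∀ x : ℝ, HasDerivAt (fun x => δ * Real.exp (-x) / m x)
      ((-(δ * Real.exp (-x)) * m x - δ * Real.exp (-x) * (-(δ * Real.exp (-x)))) / (m x) ^ 2) x := by
    intro x
    have h1 : HasDerivAt (fun x : ℝ => δ * Real.exp (-x)) (-(δ * Real.exp (-x))) x := by
      have h2 : HasDerivAt (fun x : ℝ => Real.exp (-x)) (-Real.exp (-x)) x := by
        simpa [Function.comp_def] using (Real.hasDerivAt_exp (-x)).comp x (hasDerivAt_neg x)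
      have := h2.const_mul δ
      simpa [mul_comm] using this
    exact h1.div (hmd x) (hmpos x).ne'
  have hgd : ∀ x : ℝ, HasDerivAt g
      (1 / 4 + (-(δ * Real.exp (-x)) * m x - δ * Real.exp (-x) * (-(δ * Real.exp (-x)))) / (m x) ^ 2) x := by
    intro x
    have h1 : HasDerivAt (fun x : ℝ => -δ + x / 4) (1 / 4) x := by
      simpa using ((hasDerivAt_id x).div_const 4).const_add (-δ)
    exact h1.add (hqd x)
  have hgmono : Monotone g := by
    apply monotone_of_deriv_nonneg
    · exact fun x => (hgd x).differentiableAt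
    · intro x
      rw [(hgd x).deriv]
      have hmx := hmpos x
      have hex := Real.exp_pos (-x)
      have h2 : (0:ℝ) < (m x) ^ 2 := by positivity
      have h3 : -(1/4 : ℝ) ≤ (-(δ * Real.exp (-x)) * m x - δ * Real.exp (-x) * (-(δ * Real.exp (-x)))) / (m x) ^ 2 := by
        rw [le_div_iff₀ h2]
        have key : ∀ a M : ℝ, -(1/4) * M ^ 2 ≤ -a * M - a * -a := by
          intro a M; nlinarith [sq_nonneg (M - 2 * a)]
        exact key _ _
      linarith
  have hg0 : g 0 = 0 := by
    simp only [hg, hm]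
    norm_num
  set f : ℝ → ℝ := fun x => -δ * x + x ^ 2 / 8 - Real.log (m x) with hf
  have hfd : ∀ x : ℝ, HasDerivAt f (g x) x := by
    intro x
    have h1 : HasDerivAt (fun x : ℝ => -δ * x) (-δ) x := by
      simpa using (hasDerivAt_id x).const_mul (-δ)
    have h2 : HasDerivAt (fun x : ℝ => x ^ 2 / 8) (x / 4) x := by
      have := (hasDerivAt_pow 2 x).div_const 8
      refine this.congr_deriv ?_
      simp only [Nat.cast_ofNat, show (2:ℕ) - 1 = 1 from rfl, pow_one]
      ring
    have h3 : HasDerivAt (fun x : ℝ => Real.log (m x)) (-(δ * Real.exp (-x)) / m x) x :=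
      (hmd x).log (hmpos x).ne'
    have := (h1.add h2).sub h3
    refine this.congr_deriv ?_
    simp only [hg]
    field_simp
    ring
  have hfmono : MonotoneOn f (Set.Ici (0:ℝ)) := by
    apply monotoneOn_of_deriv_nonneg (convex_Ici 0)
    · exact (Differentiable.continuous (fun x => (hfd x).differentiableAt)).continuousOn
    · exact fun x _ => (hfd x).differentiableAt.differentiableWithinAt
    · intro x hx
      rw [(hfd x).deriv]
      rw [interior_Ici] at hx
      have := hgmono (le_of_lt hx)
      linarith [hg0 ▸ this]
  have hf0 : f 0 = 0 := by
    simp only [hf, hm]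
    norm_num
  have hft : 0 ≤ f t := by
    have := hfmono (Set.self_mem_Ici) (Set.mem_Ici.mpr ht) ht
    rw [hf0] at this
    exact this
  have hlog : Real.log (m t) ≤ -δ * t + t ^ 2 / 8 := by
    simp only [hf] at hft; linarith
  calc m t = Real.exp (Real.log (m t)) := (Real.exp_log (hmpos t)).symm
    _ ≤ Real.exp (-δ * t + t ^ 2 / 8) := Real.exp_le_exp.mpr hlog

/-- Hoeffding lower tail bound for the binomial distribution: for `0 ≤ λ < δ ≤ 1`
and `w = ⌊λn⌋`, `Σ_{v=0}^{w−1} (n choose v) δ^v (1−δ)^{n−v} ≤ exp(−n(δ−λ)²)`. -/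
theorem stmt13 (n : ℕ) (hn : 1 ≤ n) (δ lam : ℝ)
    (h0 : 0 ≤ lam) (h1 : lam < δ) (h2 : δ ≤ 1) :
    ∑ v ∈ Finset.range ⌊lam * n⌋₊,
        (n.choose v : ℝ) * δ ^ v * (1 - δ) ^ (n - v)
      ≤ Real.exp (-(n : ℝ) * (δ - lam) ^ 2) := by
  have hδ0 : 0 < δ := lt_of_le_of_lt h0 h1
  have h1δ : (0:ℝ) ≤ 1 - δ := by linarith
  set t : ℝ := 2 * (δ - lam) with htdef
  have ht0 : 0 < t := by simp only [htdef]; linarith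
  set w := ⌊lam * n⌋₊ with hw
  have hwle : (w : ℝ) ≤ lam * n := Nat.floor_le (by positivity)
  have hwn : w ≤ n := by
    have : ⌊lam * n⌋₊ ≤ ⌊(n:ℝ)⌋₊ := Nat.floor_le_floor (by nlinarith)
    simpa using this
  -- step 1: termwise Chernoff bound
  have step1 : ∀ v ∈ Finset.range w, (n.choose v : ℝ) * δ ^ v * (1 - δ) ^ (n - v)
      ≤ Real.exp (t * (lam * n)) * ((δ * Real.exp (-t)) ^ v * (1 - δ) ^ (n - v) * (n.choose v : ℝ)) := by
    intro v hv
    have hvw : (v : ℝ) < w := by exact_mod_cast Finset.mem_range.mp hv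
    have hexp1 : (1:ℝ) ≤ Real.exp (t * (lam * n - v)) := by
      apply Real.one_le_exp
      have : (v:ℝ) ≤ lam * n := le_trans (le_of_lt hvw) hwle
      nlinarith
    have hterm : (0:ℝ) ≤ (n.choose v : ℝ) * δ ^ v * (1 - δ) ^ (n - v) := by positivity
    calc (n.choose v : ℝ) * δ ^ v * (1 - δ) ^ (n - v)
        ≤ Real.exp (t * (lam * n - v)) * ((n.choose v : ℝ) * δ ^ v * (1 - δ) ^ (n - v)) := by
          nlinarith
      _ = Real.exp (t * (lam * n)) * ((δ * Real.exp (-t)) ^ v * (1 - δ) ^ (n - v) * (n.choose v : ℝ)) := by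
          rw [mul_pow, ← Real.exp_nat_mul]
          rw [show t * (lam * n - v) = t * (lam * n) + (v : ℝ) * (-t) by ring]
          rw [Real.exp_add]
          ring
  have sumle := Finset.sum_le_sum step1
  -- step 2: extend to full range and use the binomial theorem
  have step2 : ∑ v ∈ Finset.range w,
        Real.exp (t * (lam * n)) * ((δ * Real.exp (-t)) ^ v * (1 - δ) ^ (n - v) * (n.choose v : ℝ))
      ≤ Real.exp (t * (lam * n)) * (δ * Real.exp (-t) + (1 - δ)) ^ n := by
    rw [← Finset.mul_sum]
    apply mul_le_mul_of_nonneg_left _ (Real.exp_pos _).le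
    rw [add_pow]
    apply Finset.sum_le_sum_of_subset_of_nonneg
    · exact Finset.range_subset_range.mpr (by omega)
    · intro v _ _
      have h := (Real.exp_pos (-t)).le
      positivity
  -- step 3: bound the base by the mgf bound
  have hbase : (0:ℝ) ≤ δ * Real.exp (-t) + (1 - δ) := by positivity
  have step3 : (δ * Real.exp (-t) + (1 - δ)) ^ n ≤ Real.exp (-δ * t + t ^ 2 / 8) ^ n := by
    apply pow_le_pow_left₀ hbase
    have := bern_mgf δ hδ0 h2 t ht0.le
    linarith
  have step4 : Real.exp (t * (lam * n)) * Real.exp (-δ * t + t ^ 2 / 8) ^ n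
      ≤ Real.exp (-(n : ℝ) * (δ - lam) ^ 2) := by
    rw [← Real.exp_nat_mul, ← Real.exp_add]
    apply Real.exp_le_exp.mpr
    have hn0 : (0:ℝ) ≤ n := Nat.cast_nonneg n
    have hs : (0:ℝ) ≤ (δ - lam) ^ 2 := sq_nonneg _
    simp only [htdef]
    nlinarith
  calc ∑ v ∈ Finset.range w, (n.choose v : ℝ) * δ ^ v * (1 - δ) ^ (n - v)
      ≤ ∑ v ∈ Finset.range w,
          Real.exp (t * (lam * n)) * ((δ * Real.exp (-t)) ^ v * (1 - δ) ^ (n - v) * (n.choose v : ℝ)) := sumle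
    _ ≤ Real.exp (t * (lam * n)) * (δ * Real.exp (-t) + (1 - δ)) ^ n := step2
    _ ≤ Real.exp (t * (lam * n)) * Real.exp (-δ * t + t ^ 2 / 8) ^ n := by
        apply mul_le_mul_of_nonneg_left step3 (Real.exp_pos _).le
    _ ≤ Real.exp (-(n : ℝ) * (δ - lam) ^ 2) := step4
end

section
/- With σ₀ and σ as above (erasure channel E_{q,δ} applied to the A' system of a classical-quantum ensemble of pure states φ_u^{AA'}), the mutual information satisfies I(AU:B)_σ = (1−δ)·(S(A')_{σ₀} + S(A'|U)_{σ₀}), and I(U:B)_σ + I(A⟩BU)_σ = (1−δ)·S(A')_{σ₀} − δ·S(A'|U)_{σ₀}. -/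
open ComplexOrder

/-- Von Neumann entropy (in bits). -/
noncomputable def vN {ι : Type} [Fintype ι] [DecidableEq ι] (ρ : Matrix ι ι ℂ) : ℝ :=
  if h : ρ.IsHermitian then ∑ i, -(h.eigenvalues i * Real.logb 2 (h.eigenvalues i)) else 0


open Polynomial Matrix Finset

section CharpolyComm
variable {n : Type} [Fintype n] [DecidableEq n] {R : Type*} [Field R]

local notation "K" => FractionRing (Polynomial R)

lemma charmatrix_map_eq (M : Matrix n n R) (f : R[X] →+* K) :
    (charmatrix M).map f = f X • (1 : Matrix n n K) - M.map (f.comp C) := by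
  ext i j
  by_cases h : i = j
  · subst h; simp [charmatrix_apply_eq]
  · simp [charmatrix_apply_ne _ _ _ h, Matrix.one_apply_ne h]

lemma charpoly_mul_comm (A B : Matrix n n R) :
    (A * B).charpoly = (B * A).charpoly := by
  set f : R[X] →+* K := algebraMap R[X] K with hf
  have hinj : Function.Injective f := IsFractionRing.injective R[X] K
  apply hinj
  have hx : f X ≠ 0 := by
    intro h
    exact X_ne_zero (hinj (by simp [h]))
  set x : K := f X with hxdef
  set g : R →+* K := f.comp C with hg
  have key : ∀ C D : Matrix n n K, (x • (1 : Matrix n n K) - C * D).det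
      = (x • (1 : Matrix n n K) - D * C).det := by
    intro C D
    have h1 : x • (1 : Matrix n n K) - C * D = x • ((1 : Matrix n n K) - (x⁻¹ • C) * D) := by
      rw [smul_sub, smul_mul_assoc, smul_smul, mul_inv_cancel₀ hx, one_smul]
    have h2 : x • (1 : Matrix n n K) - D * C = x • ((1 : Matrix n n K) - D * (x⁻¹ • C)) := by
      rw [smul_sub, mul_smul_comm, smul_smul, mul_inv_cancel₀ hx, one_smul]
    rw [h1, h2, Matrix.det_smul, Matrix.det_smul, Matrix.det_one_sub_mul_comm]
  have hmap : ∀ M : Matrix n n R, f M.charpoly = ((charmatrix M).map f).det := by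
    intro M
    rw [Matrix.charpoly, RingHom.map_det]
    rfl
  rw [hmap, hmap, charmatrix_map_eq, charmatrix_map_eq, ← hxdef, ← hg]
  have hAB : (A * B).map g = A.map g * B.map g := by
    ext i j; simp [Matrix.map_apply, Matrix.mul_apply]
  have hBA : (B * A).map g = B.map g * A.map g := by
    ext i j; simp [Matrix.map_apply, Matrix.mul_apply]
  rw [hAB, hBA, key]

end CharpolyComm

variable {n : Type} [Fintype n] [DecidableEq n]

lemma my_charpoly_transpose (M : Matrix n n ℂ) : Mᵀ.charpoly = M.charpoly := by
  have h : charmatrix Mᵀ = (charmatrix M)ᵀ := by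
    ext i j
    by_cases h : i = j
    · subst h; simp [charmatrix_apply_eq]
    · simp [charmatrix_apply_ne _ _ _ h, charmatrix_apply_ne _ _ _ (Ne.symm h)]
  rw [Matrix.charpoly, Matrix.charpoly, h, Matrix.det_transpose]

lemma my_charpoly_diagonal (d : n → ℂ) :
    (diagonal d).charpoly = ∏ i, (X - C (d i)) := by
  have h : charmatrix (diagonal d) = diagonal (fun i => X - C (d i)) := by
    ext i j
    by_cases h : i = j
    · subst h; simp [charmatrix_apply_eq]
    · simp [charmatrix_apply_ne _ _ _ h, diagonal_apply_ne _ h]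
  rw [Matrix.charpoly, h, Matrix.det_diagonal]

lemma my_charpoly_conj (V W M : Matrix n n ℂ) (hVW : V * W = 1) :
    (V * M * W).charpoly = M.charpoly := by
  have hWV : W * V = 1 := mul_eq_one_comm.mp hVW
  have hC : ∀ (A B : Matrix n n ℂ), (A * B).map (C : ℂ →+* ℂ[X])
      = A.map (C : ℂ →+* ℂ[X]) * B.map (C : ℂ →+* ℂ[X]) := by
    intro A B; ext i j; simp [Matrix.map_apply, Matrix.mul_apply]
  set V' := V.map (C : ℂ →+* ℂ[X])
  set W' := W.map (C : ℂ →+* ℂ[X])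
  have hVW' : V' * W' = 1 := by
    rw [← hC, hVW]; ext i j; by_cases h : i = j <;>
      simp [Matrix.map_apply, Matrix.one_apply, h]
  have hWV' : W' * V' = 1 := mul_eq_one_comm.mp hVW'
  have key : charmatrix (V * M * W) = V' * charmatrix M * W' := by
    rw [charmatrix, charmatrix, RingHom.mapMatrix_apply, RingHom.mapMatrix_apply,
      Matrix.mul_sub, Matrix.sub_mul]
    congr 1
    · rw [Matrix.scalar_apply, ← Matrix.smul_one_eq_diagonal, mul_smul_comm, smul_mul_assoc, mul_one, hVW']
    · rw [hC, hC]
  rw [Matrix.charpoly, Matrix.charpoly, key, Matrix.det_mul, Matrix.det_mul]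
  have : V'.det * W'.det = 1 := by rw [← Matrix.det_mul, hVW', Matrix.det_one]
  calc V'.det * (charmatrix M).det * W'.det
      = V'.det * W'.det * (charmatrix M).det := by ring
    _ = (charmatrix M).det := by rw [this, one_mul]

lemma charpoly_real_smul_herm (c : ℝ) {A : Matrix n n ℂ} (hA : A.IsHermitian) :
    ((c : ℂ) • A).charpoly = ((Finset.univ.val.map fun i => c * hA.eigenvalues i).map
      (fun x : ℝ => (X : ℂ[X]) - C (x : ℂ))).prod := by
  set V := (hA.eigenvectorUnitary : Matrix n n ℂ) with hVdef
  have hV : V * star V = 1 := by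
    exact (Matrix.mem_unitaryGroup_iff).mp hA.eigenvectorUnitary.2
  have hdec : (c : ℂ) • A = V * ((c : ℂ) • diagonal (RCLike.ofReal ∘ hA.eigenvalues)) * star V := by
    conv_lhs => rw [hA.spectral_theorem, Unitary.conjStarAlgAut_apply]
    rw [mul_smul_comm, smul_mul_assoc]
  have hdiag : (c : ℂ) • diagonal (RCLike.ofReal ∘ hA.eigenvalues)
      = diagonal (fun i => ((c * hA.eigenvalues i : ℝ) : ℂ)) := by
    ext i j
    by_cases h : i = j
    · subst h; simp [Matrix.diagonal_apply_eq]
    · simp [Matrix.diagonal_apply_ne _ h]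
  rw [hdec, hdiag, my_charpoly_conj _ _ _ hV, my_charpoly_diagonal,
    Multiset.map_map, ← Finset.prod_eq_multiset_prod]
  rfl

variable {n : Type} [Fintype n] [DecidableEq n]

/-- product of (X - root) over a real multiset -/
noncomputable def cpm (m : Multiset ℝ) : ℂ[X] :=
  (m.map fun x : ℝ => (X : ℂ[X]) - C (x : ℂ)).prod

lemma cpm_add (m₁ m₂ : Multiset ℝ) : cpm (m₁ + m₂) = cpm m₁ * cpm m₂ := by
  rw [cpm, cpm, cpm, Multiset.map_add, Multiset.prod_add]

lemma cpm_replicate_zero (k : ℕ) : cpm (Multiset.replicate k 0) = X ^ k := by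
  rw [cpm, Multiset.map_replicate, Multiset.prod_replicate]
  simp

lemma cpm_singleton (a : ℝ) : cpm {a} = X - C (a : ℂ) := by
  rw [cpm, Multiset.map_singleton, Multiset.prod_singleton]

lemma charpoly_herm {A : Matrix n n ℂ} (hA : A.IsHermitian) :
    A.charpoly = cpm (Finset.univ.val.map hA.eigenvalues) := by
  have := charpoly_real_smul_herm 1 hA
  simpa [cpm] using this

lemma charpoly_smul_herm (c : ℝ) {A : Matrix n n ℂ} (hA : A.IsHermitian) :
    ((c : ℂ) • A).charpoly = cpm ((Finset.univ.val.map hA.eigenvalues).map (fun x => c * x)) := by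
  rw [charpoly_real_smul_herm c hA, cpm, Multiset.map_map, Multiset.map_map]
  simp [Function.comp]

lemma specm_unique {A : Matrix n n ℂ} (hA : A.IsHermitian) (m : Multiset ℝ)
    (h : A.charpoly = cpm m) : Finset.univ.val.map hA.eigenvalues = m := by
  have h1 := (charpoly_herm hA).symm.trans h
  have key : ∀ s : Multiset ℝ, (cpm s).roots = s.map (fun x : ℝ => (x : ℂ)) := by
    intro s
    have : cpm s = ((s.map fun x : ℝ => (x : ℂ)).map fun z : ℂ => X - C z).prod := by
      rw [cpm, Multiset.map_map]; rfl
    rw [this, Polynomial.roots_multiset_prod_X_sub_C]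
  have h2 := congrArg Polynomial.roots h1
  rw [key, key] at h2
  exact Multiset.map_injective Complex.ofReal_injective h2

lemma trace_herm {A : Matrix n n ℂ} (hA : A.IsHermitian) :
    A.trace = ∑ i, (hA.eigenvalues i : ℂ) := by
  set V := (hA.eigenvectorUnitary : Matrix n n ℂ) with hVdef
  have hV : star V * V = 1 := (Matrix.mem_unitaryGroup_iff').mp hA.eigenvectorUnitary.2
  conv_lhs => rw [hA.spectral_theorem, Unitary.conjStarAlgAut_apply]
  rw [Matrix.trace_mul_cycle, hV, one_mul, Matrix.trace_diagonal]
  rfl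

/-- entropy of a multiset of reals -/
noncomputable def ent (m : Multiset ℝ) : ℝ :=
  (m.map fun x => -(x * Real.logb 2 x)).sum

lemma ent_add (m₁ m₂ : Multiset ℝ) : ent (m₁ + m₂) = ent m₁ + ent m₂ := by
  rw [ent, ent, ent, Multiset.map_add, Multiset.sum_add]

lemma ent_replicate_zero (k : ℕ) : ent (Multiset.replicate k 0) = 0 := by
  rw [ent, Multiset.map_replicate]
  simp

lemma ent_singleton (a : ℝ) : ent {a} = -(a * Real.logb 2 a) := by
  rw [ent, Multiset.map_singleton, Multiset.sum_singleton]

lemma ent_scale (c : ℝ) (m : Multiset ℝ) :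
    ent (m.map (fun x => c * x)) = c * ent m + m.sum * -(c * Real.logb 2 c) := by
  rw [ent, Multiset.map_map]
  have hpt : ∀ x : ℝ, -((c * x) * Real.logb 2 (c * x))
      = c * -(x * Real.logb 2 x) + x * -(c * Real.logb 2 c) := by
    intro x
    by_cases hc : c = 0
    · simp [hc]
    by_cases hx : x = 0
    · simp [hx]
    rw [Real.logb, Real.log_mul hc hx]
    rw [Real.logb, Real.logb]
    field_simp
    ring
  calc (m.map fun x => -((c * x) * Real.logb 2 (c * x))).sum
      = (m.map fun x => c * -(x * Real.logb 2 x) + x * -(c * Real.logb 2 c)).sum := by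
        congr 1; exact Multiset.map_congr rfl (fun x _ => hpt x)
    _ = c * ent m + m.sum * -(c * Real.logb 2 c) := by
        rw [Multiset.sum_map_add]
        congr 1
        · rw [ent, Multiset.sum_map_mul_left]
        · rw [Multiset.sum_map_mul_right]
          simp [Multiset.map_id']

lemma vN_herm {A : Matrix n n ℂ} (hA : A.IsHermitian) (m : Multiset ℝ)
    (h : A.charpoly = cpm m) : vN A = ent m := by
  rw [vN, dif_pos hA, ent, ← specm_unique hA m h, Multiset.map_map,
    ← Finset.sum_eq_multiset_sum]
  rfl

lemma specm_sum {A : Matrix n n ℂ} (hA : A.IsHermitian) (m : Multiset ℝ)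
    (h : A.charpoly = cpm m) {t : ℝ} (ht : A.trace = (t : ℂ)) : m.sum = t := by
  have h1 := trace_herm hA
  rw [ht] at h1
  have h2 : ((Multiset.map hA.eigenvalues Finset.univ.val).sum : ℂ)
      = ∑ i, (hA.eigenvalues i : ℂ) := by
    rw [← Finset.sum_eq_multiset_sum]
    push_cast
    rfl
  rw [← specm_unique hA m h]
  exact_mod_cast h2.trans h1.symm

lemma cpm_map {U : Type} [Fintype U] (g : U → ℝ) :
    cpm (Finset.univ.val.map g) = ∏ u, ((X : ℂ[X]) - C ((g u : ℝ) : ℂ)) := by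
  rw [cpm, Multiset.map_map, ← Finset.prod_eq_multiset_prod]
  rfl

lemma charpoly_blockish {m' U : Type} [Fintype m'] [DecidableEq m'] [Fintype U] [DecidableEq U]
    (M : U → Matrix m' m' ℂ) :
    (Matrix.of fun (P P' : U × m') =>
      if P.1 = P'.1 then M P.1 P.2 P'.2 else 0).charpoly = ∏ u, (M u).charpoly := by
  have hre : (Matrix.of fun (P P' : U × m') => if P.1 = P'.1 then M P.1 P.2 P'.2 else 0)
      = reindex (Equiv.prodComm m' U) (Equiv.prodComm m' U) (blockDiagonal M) := by
    ext ⟨u, x⟩ ⟨u', y⟩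
    simp [Matrix.blockDiagonal_apply, eq_comm]
  have hcm : charmatrix (blockDiagonal M) = blockDiagonal (fun u => charmatrix (M u)) := by
    ext ⟨x, u⟩ ⟨y, u'⟩
    by_cases h : u = u'
    · subst h
      by_cases hxy : x = y
      · subst hxy; simp [charmatrix_apply_eq, Matrix.blockDiagonal_apply]
      · simp [charmatrix_apply_ne _ _ _ (by simp [hxy] : ((x,u) : m' × U) ≠ (y,u)),
          Matrix.blockDiagonal_apply, charmatrix_apply_ne _ _ _ hxy]
    · simp [charmatrix_apply_ne _ _ _ (by simp [h] : ((x,u) : m' × U) ≠ (y,u')),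
        Matrix.blockDiagonal_apply, h]
  rw [hre, charpoly_reindex, Matrix.charpoly, hcm, Matrix.det_blockDiagonal]
  rfl

lemma isHermitian_of_star {ι : Type} [Fintype ι] (A : Matrix ι ι ℂ)
    (h : ∀ i j, star (A i j) = A j i) : A.IsHermitian := by
  ext i j
  rw [Matrix.conjTranspose_apply]
  exact h j i

/-- splitting equiv for the B system -/
def eB (q : ℕ) : Option (Fin q) ≃ (Fin q) ⊕ Unit where
  toFun x := match x with | some b => Sum.inl b | none => Sum.inr ()
  invFun y := match y with | .inl b => some b | .inr _ => none
  left_inv := by rintro (_|b) <;> rfl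
  right_inv := by rintro (b|⟨⟩) <;> rfl

/-- splitting equiv for the UAB system -/
def eS (q : ℕ) (U : Type) : (U × Fin q × Option (Fin q)) ≃ ((U × Fin q × Fin q) ⊕ (U × Fin q)) where
  toFun x := match x with
    | (u, a, some b) => Sum.inl (u, a, b)
    | (u, a, none) => Sum.inr (u, a)
  invFun y := match y with
    | .inl (u, a, b) => (u, a, some b)
    | .inr (u, a) => (u, a, none)
  left_inv := by rintro ⟨u, a, _|b⟩ <;> rfl
  right_inv := by rintro (⟨u, a, b⟩|⟨u, a⟩) <;> rfl
/-- For the output `σ` of the erasure channel applied to the `A'` part of a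
classical-quantum ensemble `σ₀` of pure states:
`I(AU:B)_σ = (1−δ)(S(A')_{σ₀} + S(A'|U)_{σ₀})` and
`I(U:B)_σ + I(A⟩BU)_σ = (1−δ)S(A')_{σ₀} − δ·S(A'|U)_{σ₀}`. -/
theorem stmt19 (q : ℕ) (hq : 0 < q) (δ : ℝ) (hδ : δ ∈ Set.Icc (0 : ℝ) 1)
    (U : Type) [Fintype U] [DecidableEq U]
    (p : U → ℝ) (hp : ∀ u, 0 ≤ p u) (hp1 : ∑ u, p u = 1)
    (ψ : U → (Fin q × Fin q) → ℂ) (hψ : ∀ u, ∑ x, Complex.normSq (ψ u x) = 1) :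
    let φ : U → Matrix (Fin q × Fin q) (Fin q × Fin q) ℂ :=
      fun u => Matrix.of fun x y => ψ u x * star (ψ u y)
    let σ0 : Matrix (U × Fin q × Fin q) (U × Fin q × Fin q) ℂ :=
      Matrix.of fun P P' =>
        if P.1 = P'.1 then (p P.1 : ℂ) * φ P.1 P.2 P'.2 else 0
    let σ : Matrix (U × Fin q × Option (Fin q)) (U × Fin q × Option (Fin q)) ℂ :=
      Matrix.of fun P P' =>
        match P.2.2, P'.2.2 with
        | some b, some b' => ((1 : ℂ) - (δ : ℂ)) * σ0 (P.1, P.2.1, b) (P'.1, P'.2.1, b')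
        | none, none => (δ : ℂ) * ∑ b : Fin q, σ0 (P.1, P.2.1, b) (P'.1, P'.2.1, b)
        | _, _ => 0
    let σU : Matrix U U ℂ :=
      Matrix.of fun u u' => ∑ x : Fin q × Option (Fin q), σ (u, x) (u', x)
    let σUA : Matrix (U × Fin q) (U × Fin q) ℂ :=
      Matrix.of fun P P' => ∑ ob : Option (Fin q), σ (P.1, P.2, ob) (P'.1, P'.2, ob)
    let σUB : Matrix (U × Option (Fin q)) (U × Option (Fin q)) ℂ :=
      Matrix.of fun P P' => ∑ a : Fin q, σ (P.1, a, P.2) (P'.1, a, P'.2)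
    let σB : Matrix (Option (Fin q)) (Option (Fin q)) ℂ :=
      Matrix.of fun ob ob' => ∑ u : U, ∑ a : Fin q, σ (u, a, ob) (u, a, ob')
    let σ0U : Matrix U U ℂ :=
      Matrix.of fun u u' => ∑ x : Fin q × Fin q, σ0 (u, x) (u', x)
    let σ0UA' : Matrix (U × Fin q) (U × Fin q) ℂ :=
      Matrix.of fun P P' => ∑ a : Fin q, σ0 (P.1, a, P.2) (P'.1, a, P'.2)
    let σ0A' : Matrix (Fin q) (Fin q) ℂ :=
      Matrix.of fun b b' => ∑ u : U, ∑ a : Fin q, σ0 (u, a, b) (u, a, b')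
    (vN σUA + vN σB - vN σ = (1 - δ) * (vN σ0A' + (vN σ0UA' - vN σ0U))) ∧
    ((vN σU + vN σB - vN σUB) + ((vN σUB - vN σU) - (vN σ - vN σU))
        = (1 - δ) * vN σ0A' - δ * (vN σ0UA' - vN σ0U)) := by
  intro φ σ0 σ σU σUA σUB σB σ0U σ0UA' σ0A'
  have hδ1 : (0:ℝ) ≤ δ := hδ.1
  have hstarδ : star ((δ:ℝ):ℂ) = ((δ:ℝ):ℂ) := by
    simp [Complex.star_def, Complex.conj_ofReal]
  have hstarp : ∀ u, star ((p u : ℝ):ℂ) = ((p u : ℝ):ℂ) := by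
    intro u
    simp [Complex.star_def, Complex.conj_ofReal]
  have hδ2 : δ ≤ 1 := hδ.2
  -- helper sums
  have hsum : ∀ u, (∑ x : Fin q × Fin q, ψ u x * star (ψ u x)) = (1:ℂ) := by
    intro u
    have h : ∀ x, ψ u x * star (ψ u x) = ((Complex.normSq (ψ u x) : ℝ) : ℂ) := fun x =>
      Complex.mul_conj _
    rw [Finset.sum_congr rfl fun x _ => h x, ← Complex.ofReal_sum, hψ u, Complex.ofReal_one]
  -- auxiliary matrices
  set G : U → Matrix (Fin q) (Fin q) ℂ :=
    fun u => Matrix.of fun a a' => (p u : ℂ) * ∑ b, ψ u (a, b) * star (ψ u (a', b)) with hG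
  set G' : U → Matrix (Fin q) (Fin q) ℂ :=
    fun u => Matrix.of fun b b' => (p u : ℂ) * ∑ a, ψ u (a, b) * star (ψ u (a, b')) with hG'
  set sUA : Matrix (U × Fin q) (U × Fin q) ℂ :=
    Matrix.of (fun P P' => if P.1 = P'.1 then G P.1 P.2 P'.2 else 0) with hsUA
  -- matrix identities
  have hkey0 : ∀ u a u' a' (b b' : Fin q), σ0 (u,a,b) (u',a',b')
      = if u = u' then (p u : ℂ) * (ψ u (a,b) * star (ψ u (a',b'))) else 0 := by
    intro u a u' a' b b'
    simp only [σ0, φ, Matrix.of_apply]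
  have mU : σU = σ0U := by
    ext u u'
    show ∑ x : Fin q × Option (Fin q), σ (u,x) (u',x) = ∑ x : Fin q × Fin q, σ0 (u,x) (u',x)
    rw [Fintype.sum_prod_type, Fintype.sum_prod_type]
    refine Finset.sum_congr rfl fun a _ => ?_
    rw [Fintype.sum_option]
    show (δ:ℂ) * (∑ b, σ0 (u,a,b) (u',a,b)) + ∑ b, ((1:ℂ)-(δ:ℂ)) * σ0 (u,a,b) (u',a,b) = _
    rw [← Finset.mul_sum]
    ring
  have m0U : σ0U = Matrix.diagonal (fun u => (p u : ℂ)) := by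
    ext u u'
    show ∑ x : Fin q × Fin q, σ0 (u,x) (u',x) = _
    by_cases h : u = u'
    · subst h
      rw [Matrix.diagonal_apply_eq]
      calc ∑ x : Fin q × Fin q, σ0 (u,x) (u,x)
          = ∑ x : Fin q × Fin q, (p u : ℂ) * (ψ u x * star (ψ u x)) := by
            refine Finset.sum_congr rfl fun x _ => ?_
            rw [hkey0, if_pos rfl]
        _ = (p u : ℂ) := by rw [← Finset.mul_sum, hsum, mul_one]
    · rw [Matrix.diagonal_apply_ne _ h]
      refine Finset.sum_eq_zero fun x _ => ?_
      rw [hkey0, if_neg h]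
  have hkey : ∀ u a u' a', (∑ b, σ0 (u,a,b) (u',a',b)) = sUA (u,a) (u',a') := by
    intro u a u' a'
    show _ = if u = u' then G u a a' else 0
    by_cases h : u = u'
    · subst h
      rw [if_pos rfl]
      show _ = (p u : ℂ) * ∑ b, ψ u (a, b) * star (ψ u (a', b))
      rw [Finset.mul_sum]
      refine Finset.sum_congr rfl fun b _ => ?_
      rw [hkey0, if_pos rfl]
    · rw [if_neg h]
      refine Finset.sum_eq_zero fun b _ => ?_
      rw [hkey0, if_neg h]
  have mUA : σUA = sUA := by
    ext ⟨u,a⟩ ⟨u',a'⟩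
    show ∑ ob : Option (Fin q), σ (u,a,ob) (u',a',ob) = _
    rw [Fintype.sum_option]
    show (δ:ℂ) * (∑ b, σ0 (u,a,b) (u',a',b)) + ∑ b, ((1:ℂ)-(δ:ℂ)) * σ0 (u,a,b) (u',a',b) = _
    rw [← Finset.mul_sum, hkey u a u' a']
    ring
  have mUA' : σ0UA' = Matrix.of (fun P P' => if P.1 = P'.1 then G' P.1 P.2 P'.2 else 0) := by
    ext ⟨u,b⟩ ⟨u',b'⟩
    show ∑ a, σ0 (u,a,b) (u',a,b') = if u = u' then G' u b b' else 0
    by_cases h : u = u'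
    · subst h
      rw [if_pos rfl]
      show _ = (p u : ℂ) * ∑ a, ψ u (a, b) * star (ψ u (a, b'))
      rw [Finset.mul_sum]
      refine Finset.sum_congr rfl fun a _ => ?_
      rw [hkey0, if_pos rfl]
    · rw [if_neg h]
      refine Finset.sum_eq_zero fun a _ => ?_
      rw [hkey0, if_neg h]
  have hptot : ∑ u, (p u : ℂ) = 1 := by
    rw [← Complex.ofReal_sum, hp1, Complex.ofReal_one]
  have htr : ∀ u, ∑ a, ∑ b, σ0 (u,a,b) (u,a,b) = (p u : ℂ) := by
    intro u
    have e1 : ∑ x : Fin q × Fin q, σ0 (u,x.1,x.2) (u,x.1,x.2)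
        = ∑ a, ∑ b, σ0 (u,a,b) (u,a,b) := Fintype.sum_prod_type _
    rw [← e1]
    calc ∑ x : Fin q × Fin q, σ0 (u, x.1, x.2) (u, x.1, x.2)
        = ∑ x : Fin q × Fin q, (p u : ℂ) * (ψ u x * star (ψ u x)) := by
          refine Finset.sum_congr rfl fun x _ => ?_
          rw [hkey0, if_pos rfl]
      _ = (p u : ℂ) := by rw [← Finset.mul_sum, hsum, mul_one]
  have mB : (Matrix.reindex (eB q) (eB q)) σB
      = Matrix.fromBlocks (((1 - δ : ℝ) : ℂ) • σ0A') 0 0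
          (Matrix.of fun _ _ : Unit => (δ:ℂ)) := by
    ext x y
    rcases x with b | ⟨⟩ <;> rcases y with b' | ⟨⟩
    · show ∑ u, ∑ a, ((1:ℂ)-(δ:ℂ)) * σ0 (u,a,b) (u,a,b')
        = ((1 - δ : ℝ) : ℂ) * ∑ u, ∑ a, σ0 (u,a,b) (u,a,b')
      simp only [Complex.ofReal_sub, Complex.ofReal_one, Finset.mul_sum]
    · show ∑ u, ∑ a, σ (u,a,some b) (u,a,none) = 0
      exact Finset.sum_eq_zero fun u _ => Finset.sum_eq_zero fun a _ => rfl
    · show ∑ u, ∑ a, σ (u,a,none) (u,a,some b') = 0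
      exact Finset.sum_eq_zero fun u _ => Finset.sum_eq_zero fun a _ => rfl
    · show ∑ u, ∑ a, (δ:ℂ) * ∑ b, σ0 (u,a,b) (u,a,b) = (δ:ℂ)
      simp only [← Finset.mul_sum]
      rw [Finset.sum_congr rfl fun u (_ : u ∈ Finset.univ) => htr u, hptot, mul_one]
  have mS : (Matrix.reindex (eS q U) (eS q U)) σ
      = Matrix.fromBlocks (((1 - δ : ℝ) : ℂ) • σ0) 0 0 (((δ:ℝ):ℂ) • sUA) := by
    ext x y
    rcases x with ⟨u,a,b⟩ | ⟨u,a⟩ <;> rcases y with ⟨u',a',b'⟩ | ⟨u',a'⟩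
    · show ((1:ℂ)-(δ:ℂ)) * σ0 (u,a,b) (u',a',b') = ((1 - δ : ℝ) : ℂ) * σ0 (u,a,b) (u',a',b')
      simp only [Complex.ofReal_sub, Complex.ofReal_one]
    · show (0:ℂ) = 0
      rfl
    · show (0:ℂ) = 0
      rfl
    · show (δ:ℂ) * ∑ b, σ0 (u,a,b) (u',a',b) = (δ:ℂ) * sUA (u,a) (u',a')
      rw [hkey]
  -- hermiticity
  have hσ0H : σ0.IsHermitian := by
    refine isHermitian_of_star _ fun ⟨u,a,b⟩ ⟨u',a',b'⟩ => ?_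
    rw [hkey0, hkey0]
    by_cases h : u = u'
    · subst h
      rw [if_pos rfl, if_pos rfl, star_mul', star_mul', star_star, hstarp u]
      ring
    · rw [if_neg h, if_neg fun hh => h hh.symm, star_zero]
  have hσ0e : ∀ x y, star (σ0 x y) = σ0 y x := by
    intro x y
    conv_rhs => rw [← hσ0H]
    rfl
  have hσH : σ.IsHermitian := by
    refine isHermitian_of_star _ fun ⟨u,a,ob⟩ ⟨u',a',ob'⟩ => ?_
    rcases ob with _ | b <;> rcases ob' with _ | b'
    · show star ((δ:ℂ) * ∑ b, σ0 (u,a,b) (u',a',b)) = (δ:ℂ) * ∑ b, σ0 (u',a',b) (u,a,b)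
      rw [star_mul', star_sum, hstarδ,
        Finset.sum_congr rfl fun b (_ : b ∈ Finset.univ) => hσ0e (u,a,b) (u',a',b)]
    · show star (0:ℂ) = 0
      exact star_zero _
    · show star (0:ℂ) = 0
      exact star_zero _
    · show star (((1:ℂ)-(δ:ℂ)) * σ0 (u,a,b) (u',a',b'))
        = ((1:ℂ)-(δ:ℂ)) * σ0 (u',a',b') (u,a,b)
      rw [star_mul', star_sub, star_one, hstarδ, hσ0e]
  have hσe : ∀ x y, star (σ x y) = σ y x := by
    intro x y
    conv_rhs => rw [← hσH]
    rfl
  have hsUAH : sUA.IsHermitian := by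
    rw [← mUA]
    refine isHermitian_of_star _ fun ⟨u,a⟩ ⟨u',a'⟩ => ?_
    show star (∑ ob : Option (Fin q), σ (u,a,ob) (u',a',ob)) = _
    rw [star_sum]
    exact Finset.sum_congr rfl fun ob _ => hσe _ _
  have hσ0UA'H : σ0UA'.IsHermitian := by
    refine isHermitian_of_star _ fun ⟨u,b⟩ ⟨u',b'⟩ => ?_
    show star (∑ a, σ0 (u,a,b) (u',a,b')) = _
    rw [star_sum]
    exact Finset.sum_congr rfl fun a _ => hσ0e _ _
  have hσ0UH : σ0U.IsHermitian := by
    refine isHermitian_of_star _ fun u u' => ?_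
    show star (∑ x : Fin q × Fin q, σ0 (u,x) (u',x)) = _
    rw [star_sum]
    exact Finset.sum_congr rfl fun x _ => hσ0e _ _
  have hσ0A'H : σ0A'.IsHermitian := by
    refine isHermitian_of_star _ fun b b' => ?_
    show star (∑ u, ∑ a, σ0 (u,a,b) (u,a,b')) = _
    rw [star_sum]
    refine Finset.sum_congr rfl fun u _ => ?_
    rw [star_sum]
    exact Finset.sum_congr rfl fun a _ => hσ0e _ _
  have hσBH : σB.IsHermitian := by
    refine isHermitian_of_star _ fun ob ob' => ?_
    show star (∑ u, ∑ a, σ (u,a,ob) (u,a,ob')) = _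
    rw [star_sum]
    refine Finset.sum_congr rfl fun u _ => ?_
    rw [star_sum]
    exact Finset.sum_congr rfl fun a _ => hσe _ _
  -- eigenvalue multisets
  set PP : Multiset ℝ := Finset.univ.val.map p with hPP
  set QQ : Multiset ℝ := Finset.univ.val.map hσ0UA'H.eigenvalues with hQQ
  set RR : Multiset ℝ := Finset.univ.val.map hσ0A'H.eigenvalues with hRR
  set KK : ℕ := Fintype.card U * (q * q - 1) with hKK
  -- charpoly facts
  have hcpA' : σ0A'.charpoly = cpm RR := charpoly_herm hσ0A'H
  have hcpUA' : σ0UA'.charpoly = cpm QQ := charpoly_herm hσ0UA'H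
  have hcp0U : σ0U.charpoly = cpm PP := by
    rw [m0U, my_charpoly_diagonal, hPP, cpm_map]
  have hsstar : ∀ u, star ((Real.sqrt (p u) : ℝ):ℂ) = ((Real.sqrt (p u) : ℝ):ℂ) := by
    intro u
    simp [Complex.star_def, Complex.conj_ofReal]
  have hss : ∀ u, ((Real.sqrt (p u) : ℝ):ℂ) * ((Real.sqrt (p u) : ℝ):ℂ) = ((p u : ℝ):ℂ) := by
    intro u
    rw [← Complex.ofReal_mul, Real.mul_self_sqrt (hp u)]
  have hcpG : ∀ u, (G u).charpoly = (G' u).charpoly := by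
    intro u
    set Y : Matrix (Fin q) (Fin q) ℂ :=
      Matrix.of fun a b => ((Real.sqrt (p u) : ℝ):ℂ) * ψ u (a, b) with hY
    have hY1 : G u = Y * Yᴴ := by
      ext a a'
      show (p u : ℂ) * ∑ b, ψ u (a, b) * star (ψ u (a', b)) = ∑ b, Y a b * star (Y a' b)
      rw [Finset.mul_sum]
      refine Finset.sum_congr rfl fun b _ => ?_
      show _ = (((Real.sqrt (p u) : ℝ):ℂ) * ψ u (a,b)) * star (((Real.sqrt (p u) : ℝ):ℂ) * ψ u (a',b))
      rw [star_mul', hsstar u, ← hss u]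
      ring
    have hY2 : G' u = (Yᴴ * Y)ᵀ := by
      ext b b'
      show (p u : ℂ) * ∑ a, ψ u (a, b) * star (ψ u (a, b')) = ∑ a, star (Y a b') * Y a b
      rw [Finset.mul_sum]
      refine Finset.sum_congr rfl fun a _ => ?_
      show _ = star (((Real.sqrt (p u) : ℝ):ℂ) * ψ u (a,b')) * (((Real.sqrt (p u) : ℝ):ℂ) * ψ u (a,b))
      rw [star_mul', hsstar u, ← hss u]
      ring
    rw [hY1, hY2, my_charpoly_transpose]
    exact _root_.charpoly_mul_comm Y Yᴴ
  have hcpsUA : sUA.charpoly = cpm QQ :=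
    calc sUA.charpoly = ∏ u, (G u).charpoly := by rw [hsUA]; exact charpoly_blockish G
      _ = ∏ u, (G' u).charpoly := Finset.prod_congr rfl fun u _ => hcpG u
      _ = (Matrix.of (fun P P' : U × Fin q =>
            if P.1 = P'.1 then G' P.1 P.2 P'.2 else 0)).charpoly := (charpoly_blockish G').symm
      _ = σ0UA'.charpoly := by rw [← mUA']
      _ = cpm QQ := hcpUA'
  have hcp0 : σ0.charpoly = cpm (PP + Multiset.replicate KK 0) := by
    have hm : σ0 = Matrix.of (fun P P' : U × (Fin q × Fin q) =>
        if P.1 = P'.1 then (Matrix.of fun x y : Fin q × Fin q => (p P.1 : ℂ) * φ P.1 x y) P.2 P'.2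
        else 0) := by
      ext ⟨u, x⟩ ⟨u', y⟩
      rfl
    have step1 : σ0.charpoly
        = ∏ u, (Matrix.of fun x y : Fin q × Fin q => (p u : ℂ) * φ u x y).charpoly := by
      rw [hm]
      exact charpoly_blockish (fun u => Matrix.of fun x y : Fin q × Fin q => (p u : ℂ) * φ u x y)
    set y0 : Fin q × Fin q := (⟨0, hq⟩, ⟨0, hq⟩) with hy0
    have hblk : ∀ u, (Matrix.of fun x y : Fin q × Fin q => (p u : ℂ) * φ u x y).charpoly
        = (X - C ((p u : ℝ):ℂ)) * X ^ (q * q - 1) := by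
      intro u
      set Z : Matrix (Fin q × Fin q) (Fin q × Fin q) ℂ :=
        Matrix.of fun x y => if y = y0 then ((Real.sqrt (p u) : ℝ):ℂ) * ψ u x else 0 with hZ
      have hZ1 : (Matrix.of fun x y : Fin q × Fin q => (p u : ℂ) * φ u x y) = Z * Zᴴ := by
        ext x x'
        show (p u : ℂ) * (ψ u x * star (ψ u x')) = ∑ y, Z x y * star (Z x' y)
        have hterm : ∀ y, Z x y * star (Z x' y)
            = if y = y0 then (((Real.sqrt (p u) : ℝ):ℂ) * ψ u x)
                * star (((Real.sqrt (p u) : ℝ):ℂ) * ψ u x') else 0 := by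
          intro y
          by_cases hy : y = y0
          · subst hy
            simp [hZ]
          · simp [hZ, hy]
        rw [Finset.sum_congr rfl fun y _ => hterm y, Finset.sum_ite_eq' Finset.univ y0,
          if_pos (Finset.mem_univ _), star_mul', hsstar u, ← hss u]
        ring
      have hZ2 : Zᴴ * Z = Matrix.diagonal (fun y => if y = y0 then ((p u : ℝ):ℂ) else 0) := by
        ext y y'
        show ∑ x, star (Z x y) * Z x y' = _
        have hterm : ∀ x : Fin q × Fin q, star (Z x y) * Z x y'
            = if y = y0 ∧ y' = y0 then ((p u : ℝ):ℂ) * (ψ u x * star (ψ u x)) else 0 := by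
          intro x
          by_cases hy : y = y0
          · by_cases hy' : y' = y0
            · subst hy hy'
              rw [if_pos ⟨rfl, rfl⟩]
              have e1 : Z x y0 = ((Real.sqrt (p u) : ℝ):ℂ) * ψ u x := by simp [hZ]
              rw [e1, star_mul', hsstar u, ← hss u]
              ring
            · simp [hZ, hy']
          · simp [hZ, hy]
        rw [Finset.sum_congr rfl fun x _ => hterm x]
        by_cases hy : y = y0
        · by_cases hy' : y' = y0
          · subst hy hy'
            rw [Matrix.diagonal_apply_eq, if_pos rfl,
              Finset.sum_congr rfl fun x (_ : x ∈ Finset.univ) => if_pos ⟨rfl, rfl⟩,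
              ← Finset.mul_sum, hsum, mul_one]
          · rw [Matrix.diagonal_apply_ne _ fun hh => hy' (hh.symm.trans hy)]
            exact Finset.sum_eq_zero fun x _ => if_neg fun hh => hy' hh.2
        · by_cases h2 : y = y'
          · subst h2
            rw [Matrix.diagonal_apply_eq, if_neg hy]
            exact Finset.sum_eq_zero fun x _ => if_neg fun hh => hy hh.1
          · rw [Matrix.diagonal_apply_ne _ h2]
            exact Finset.sum_eq_zero fun x _ => if_neg fun hh => hy hh.1
      rw [hZ1, _root_.charpoly_mul_comm, hZ2, my_charpoly_diagonal,
        ← Finset.mul_prod_erase Finset.univ _ (Finset.mem_univ y0), if_pos rfl]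
      congr 1
      calc ∏ y ∈ Finset.univ.erase y0, ((X:ℂ[X]) - C (if y = y0 then ((p u:ℝ):ℂ) else 0))
          = ∏ _y ∈ Finset.univ.erase y0, (X:ℂ[X]) := Finset.prod_congr rfl fun y hy => by
            rw [if_neg (Finset.ne_of_mem_erase hy), map_zero, sub_zero]
        _ = X ^ (q*q-1) := by
            rw [Finset.prod_const, Finset.card_erase_of_mem (Finset.mem_univ _), Finset.card_univ]
            congr 1
            simp [Fintype.card_prod]
    rw [step1, Finset.prod_congr rfl fun u (_ : u ∈ Finset.univ) => hblk u,
      Finset.prod_mul_distrib, Finset.prod_const, Finset.card_univ, ← pow_mul,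
      cpm_add, cpm_replicate_zero, hPP, cpm_map, hKK, Nat.mul_comm]
  have hcpB : σB.charpoly = cpm (RR.map (fun x => (1 - δ) * x) + {δ}) := by
    have hδdiag : (Matrix.of fun _ _ : Unit => (δ:ℂ))
        = Matrix.diagonal (fun _ : Unit => ((δ:ℝ):ℂ)) := by
      ext ⟨⟩ ⟨⟩
      rw [Matrix.diagonal_apply_eq]
      rfl
    rw [← Matrix.charpoly_reindex (eB q) σB, mB, Matrix.charpoly_fromBlocks_zero₁₂,
      charpoly_smul_herm (1-δ) hσ0A'H, ← hRR, hδdiag, my_charpoly_diagonal,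
      cpm_add, cpm_singleton]
    simp
  have hcpS : σ.charpoly = cpm ((PP + Multiset.replicate KK 0).map (fun x => (1 - δ) * x)
      + QQ.map (fun x => δ * x)) := by
    rw [← Matrix.charpoly_reindex (eS q U) σ, mS, Matrix.charpoly_fromBlocks_zero₁₂,
      charpoly_smul_herm (1-δ) hσ0H, charpoly_smul_herm δ hsUAH,
      specm_unique hσ0H _ hcp0, specm_unique hsUAH _ hcpsUA, cpm_add]
  -- sums
  have hPPsum : PP.sum = 1 := by
    rw [hPP, ← Finset.sum_eq_multiset_sum]
    exact hp1
  have hQQsum : QQ.sum = 1 := by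
    refine specm_sum hσ0UA'H QQ hcpUA' (t := 1) ?_
    show ∑ P : U × Fin q, σ0UA' P P = _
    have e0 : ∀ P : U × Fin q, σ0UA' P P = ∑ a, σ0 (P.1, a, P.2) (P.1, a, P.2) := fun _ => rfl
    rw [Finset.sum_congr rfl fun P _ => e0 P]
    have e1 : ∑ P : U × Fin q, ∑ a, σ0 (P.1, a, P.2) (P.1, a, P.2)
        = ∑ u, ∑ b, ∑ a, σ0 (u, a, b) (u, a, b) := Fintype.sum_prod_type _
    rw [e1]
    have e2 : ∀ u, ∑ b, ∑ a, σ0 (u, a, b) (u, a, b) = (p u : ℂ) := by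
      intro u
      rw [Finset.sum_comm]
      exact htr u
    rw [Finset.sum_congr rfl fun u _ => e2 u, hptot, Complex.ofReal_one]
  have hRRsum : RR.sum = 1 := by
    refine specm_sum hσ0A'H RR hcpA' (t := 1) ?_
    show ∑ b : Fin q, σ0A' b b = _
    have e0 : ∀ b : Fin q, σ0A' b b = ∑ u, ∑ a, σ0 (u, a, b) (u, a, b) := fun _ => rfl
    rw [Finset.sum_congr rfl fun b _ => e0 b, Finset.sum_comm]
    have e2 : ∀ u, ∑ b, ∑ a, σ0 (u, a, b) (u, a, b) = (p u : ℂ) := by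
      intro u
      rw [Finset.sum_comm]
      exact htr u
    rw [Finset.sum_congr rfl fun u _ => e2 u, hptot, Complex.ofReal_one]
  -- entropies
  have hv1 : vN σUA = ent QQ := by rw [mUA]; exact vN_herm hsUAH QQ hcpsUA
  have hv4 : vN σU = ent PP := by rw [mU]; exact vN_herm hσ0UH PP hcp0U
  have hv5 : vN σ0U = ent PP := vN_herm hσ0UH PP hcp0U
  have hv6 : vN σ0UA' = ent QQ := vN_herm hσ0UA'H QQ hcpUA'
  have hv7 : vN σ0A' = ent RR := vN_herm hσ0A'H RR hcpA'
  have hv2 : vN σB = (1 - δ) * ent RR + -((1-δ) * Real.logb 2 (1-δ)) + -(δ * Real.logb 2 δ) := by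
    rw [vN_herm hσBH _ hcpB, ent_add, ent_scale, ent_singleton, hRRsum]
    ring
  have hv3 : vN σ = (1 - δ) * ent PP + -((1-δ) * Real.logb 2 (1-δ))
      + δ * ent QQ + -(δ * Real.logb 2 δ) := by
    rw [vN_herm hσH _ hcpS, ent_add, ent_scale, ent_scale, hQQsum, ent_add,
      ent_replicate_zero, Multiset.sum_add, hPPsum, Multiset.sum_replicate]
    simp
    ring
  constructor
  · rw [hv1, hv2, hv3, hv5, hv6, hv7]; ring
  · rw [hv2, hv3, hv4, hv5, hv6, hv7]; ring
end
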